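/- Let Z be an (n+1)×(m+1) matrix over a field K such that both the first k rows of Z and the first k columns of Z are linearly independent (where k < min{n+1, m+1}). If the determinant of the top left k×k submatrix of Z vanishes, then rank(Z) ≥ k+1. -/

import Mathlib

/-- Let `Z` be an `(n+1) × (m+1)` matrix over a field `K` such that both
the first `k` rows and the first `k` columns of `Z` are linearly independent (where
`k < min (n+1) (m+1)`). If the determinant of the top-left `k × k` submatrix of `Z`
vanishes, then `rank Z ≥ k + 1`. -/
theorem rank_ge_succ_of_rows_cols_indep_of_det_topLeft_eq_zero
    {K : Type*} [Field K] {n m k : ℕ} (hk : k < min (n + 1) (m + 1))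
    (Z : Matrix (Fin (n + 1)) (Fin (m + 1)) K)
    (hrows : LinearIndependent K (fun i : Fin k => Z (Fin.castLE (by omega) i)))
    (hcols : LinearIndependent K (fun j : Fin k => Z.transpose (Fin.castLE (by omega) j)))
    (hdet : (Z.submatrix (Fin.castLE (by omega)) (Fin.castLE (by omega)) :
      Matrix (Fin k) (Fin k) K).det = 0) :
    k + 1 ≤ Z.rank := by
  by_contra h
  push_neg at h
  have hrank : Z.rank ≤ k := by omega
  -- the span of the first k columns equals the full column span
  set p := Submodule.span K (Set.range fun j : Fin k => Z.transpose (Fin.castLE (by omega) j))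
    with hp
  set q := Submodule.span K (Set.range Z.transpose) with hq
  have hle : p ≤ q := Submodule.span_mono (by rintro _ ⟨j, rfl⟩; exact ⟨_, rfl⟩)
  have hpk : Module.finrank K p = k := by
    rw [finrank_span_eq_card hcols, Fintype.card_fin]
  have hqk : Module.finrank K q ≤ k := by
    rw [Matrix.rank_eq_finrank_span_cols] at hrank; exact hrank
  have hpq : p = q := Submodule.eq_of_le_of_finrank_le hle (by omega)
  -- det = 0 gives a nontrivial relation among the rows of the top-left block
  obtain ⟨c, hc0, hc⟩ := Matrix.exists_vecMul_eq_zero_iff.mpr hdet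
  -- the corresponding combination of the first k rows of Z
  apply hc0
  have hv : ∀ j : Fin (m + 1), ∑ i : Fin k, c i * Z (Fin.castLE (by omega) i) j = 0 := by
    intro j
    have hmem : Z.transpose j ∈ q := Submodule.subset_span ⟨j, rfl⟩
    rw [← hpq, hp, Submodule.mem_span_range_iff_exists_fun] at hmem
    obtain ⟨d, hd⟩ := hmem
    have hdj : ∀ i : Fin (n + 1),
        Z i j = ∑ t : Fin k, d t * Z i (Fin.castLE (by omega) t) := by
      intro i
      have := congrFun hd i
      simpa [Matrix.transpose, mul_comm] using this.symm
    calc ∑ i : Fin k, c i * Z (Fin.castLE (by omega) i) j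
        = ∑ i : Fin k, c i * ∑ t : Fin k, d t * Z (Fin.castLE (by omega) i)
            (Fin.castLE (by omega) t) := by
          refine Finset.sum_congr rfl fun i _ => ?_; rw [hdj]
      _ = ∑ t : Fin k, d t * ∑ i : Fin k, c i * Z (Fin.castLE (by omega) i)
            (Fin.castLE (by omega) t) := by
          simp_rw [Finset.mul_sum]
          rw [Finset.sum_comm]
          exact Finset.sum_congr rfl fun t _ => Finset.sum_congr rfl fun i _ => by ring
      _ = 0 := by
          refine Finset.sum_eq_zero fun t _ => ?_
          have h0 := congrFun hc t
          simp [Matrix.vecMul, dotProduct, Matrix.submatrix] at h0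
          rw [h0, mul_zero]
  have : ∑ i : Fin k, c i • Z (Fin.castLE (by omega) i) = 0 := by
    ext j
    simpa using hv j
  have hz := linearIndependent_iff'.mp hrows Finset.univ c (by simpa using this)
  ext i
  exact hz i (Finset.mem_univ i)
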